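/- Under the HO-GSVD assumptions with π > 0 and N ≥ 2, every eigenvalue ς of S_π satisfies 1 ≤ ς ≤ 1 + 1/(πN(1+π)). -/

import Mathlib

open Matrix Finset

lemma dotmv_symm {n : ℕ} (M : Matrix (Fin n) (Fin n) ℝ) (h : Mᵀ = M) (x y : Fin n → ℝ) :
    x ⬝ᵥ (M *ᵥ y) = y ⬝ᵥ (M *ᵥ x) := by
  rw [dotProduct_mulVec, ← h, vecMul_transpose, dotProduct_comm, h]

lemma qf_nonneg {n : ℕ} {M : Matrix (Fin n) (Fin n) ℝ} (h : M.PosSemidef) (x : Fin n → ℝ) :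
    0 ≤ x ⬝ᵥ (M *ᵥ x) := by simpa using h.dotProduct_mulVec_nonneg x

lemma qf_pos {n : ℕ} {M : Matrix (Fin n) (Fin n) ℝ} (h : M.PosDef) {x : Fin n → ℝ}
    (hx : x ≠ 0) : 0 < x ⬝ᵥ (M *ᵥ x) := by simpa using h.dotProduct_mulVec_pos hx

lemma sym_of_posSemidef {n : ℕ} {M : Matrix (Fin n) (Fin n) ℝ} (h : M.PosSemidef) : Mᵀ = M := by
  simpa [Matrix.IsHermitian, conjTranspose_eq_transpose_of_trivial] using h.1

lemma pd_inv_mulVec {n : ℕ} {M : Matrix (Fin n) (Fin n) ℝ} (h : M.PosDef) (x : Fin n → ℝ) :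
    M *ᵥ (M⁻¹ *ᵥ x) = x := by
  rw [mulVec_mulVec, Matrix.mul_nonsing_inv _ ((Matrix.isUnit_iff_isUnit_det _).mp h.isUnit),
    one_mulVec]

lemma pd_inv_mulVec' {n : ℕ} {M : Matrix (Fin n) (Fin n) ℝ} (h : M.PosDef) (x : Fin n → ℝ) :
    M⁻¹ *ᵥ (M *ᵥ x) = x := by
  rw [mulVec_mulVec, Matrix.nonsing_inv_mul _ ((Matrix.isUnit_iff_isUnit_det _).mp h.isUnit),
    one_mulVec]

lemma inv_sym {n : ℕ} {M : Matrix (Fin n) (Fin n) ℝ} (h : M.PosDef) : (M⁻¹)ᵀ = M⁻¹ := by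
  rw [transpose_nonsing_inv]
  congr 1
  exact sym_of_posSemidef h.posSemidef

lemma psd_sum {n : ℕ} {ι : Type*} (s : Finset ι) (M : ι → Matrix (Fin n) (Fin n) ℝ)
    (h : ∀ i ∈ s, (M i).PosSemidef) : (∑ i ∈ s, M i).PosSemidef :=
  Finset.sum_induction M Matrix.PosSemidef (fun _ _ ha hb => ha.add hb) Matrix.PosSemidef.zero h

/-- chord lower bound : `D⁻¹ ⪰ 2C - CDC` at the quadratic form level -/
lemma chord_lower {n : ℕ} {Dm C : Matrix (Fin n) (Fin n) ℝ} (hD : Dm.PosDef) (hDs : Dmᵀ = Dm)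
    (v : Fin n → ℝ) :
    2 * (v ⬝ᵥ (C *ᵥ v)) - (C *ᵥ v) ⬝ᵥ (Dm *ᵥ (C *ᵥ v)) ≤ v ⬝ᵥ (Dm⁻¹ *ᵥ v) := by
  have h0 : 0 ≤ (C *ᵥ v - Dm⁻¹ *ᵥ v) ⬝ᵥ (Dm *ᵥ (C *ᵥ v - Dm⁻¹ *ᵥ v)) :=
    qf_nonneg hD.posSemidef _
  have h1 : Dm *ᵥ (C *ᵥ v - Dm⁻¹ *ᵥ v) = Dm *ᵥ (C *ᵥ v) - v := by
    rw [mulVec_sub, pd_inv_mulVec hD]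
  rw [h1, dotProduct_sub, sub_dotProduct, sub_dotProduct,
    dotmv_symm Dm hDs (Dm⁻¹ *ᵥ v) (C *ᵥ v), pd_inv_mulVec hD,
    dotProduct_comm (C *ᵥ v) v, dotProduct_comm (Dm⁻¹ *ᵥ v) v] at h0
  linarith [h0]

/-- if `0 ⪯ F ⪯ D` then `F D⁻¹ F ⪯ F` at the quadratic form level -/
lemma sandwich_upper {n : ℕ} {Dm F : Matrix (Fin n) (Fin n) ℝ} (hD : Dm.PosDef)
    (hF : F.PosSemidef) (hDF : (Dm - F).PosSemidef) (x : Fin n → ℝ) :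
    x ⬝ᵥ (F *ᵥ (Dm⁻¹ *ᵥ (F *ᵥ x))) ≤ x ⬝ᵥ (F *ᵥ x) := by
  set z := Dm⁻¹ *ᵥ (F *ᵥ x) with hz
  have hFs : Fᵀ = F := sym_of_posSemidef hF
  have hDz : Dm *ᵥ z = F *ᵥ x := pd_inv_mulVec hD _
  have h0 : 0 ≤ (x - z) ⬝ᵥ (F *ᵥ (x - z)) := qf_nonneg hF _
  have h1 : 0 ≤ z ⬝ᵥ ((Dm - F) *ᵥ z) := qf_nonneg hDF _
  have e0 : (x - z) ⬝ᵥ (F *ᵥ (x - z))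
      = x ⬝ᵥ (F *ᵥ x) - 2 * (x ⬝ᵥ (F *ᵥ z)) + z ⬝ᵥ (F *ᵥ z) := by
    rw [mulVec_sub, dotProduct_sub, sub_dotProduct, sub_dotProduct,
      dotmv_symm F hFs z x]
    ring
  have e2 : x ⬝ᵥ (F *ᵥ z) = z ⬝ᵥ (F *ᵥ x) := dotmv_symm F hFs x z
  have e1 : z ⬝ᵥ ((Dm - F) *ᵥ z) = x ⬝ᵥ (F *ᵥ z) - z ⬝ᵥ (F *ᵥ z) := by
    rw [sub_mulVec, dotProduct_sub, hDz, ← e2]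
  rw [e0] at h0
  rw [e1] at h1
  linarith

lemma psd_smul {n : ℕ} {M : Matrix (Fin n) (Fin n) ℝ} (h : M.PosSemidef) {a : ℝ} (ha : 0 ≤ a) :
    (a • M).PosSemidef := by
  have hh : Mᴴ = M := h.1
  refine Matrix.PosSemidef.of_dotProduct_mulVec_nonneg ?_ (fun x => ?_)
  · show (a • M)ᴴ = a • M
    rw [conjTranspose_smul, star_trivial, hh]
  · rw [smul_mulVec, dotProduct_smul, smul_eq_mul]
    exact mul_nonneg ha (h.dotProduct_mulVec_nonneg x)

lemma sum_mulVec' {n : ℕ} {ι : Type*} [Fintype ι] (M : ι → Matrix (Fin n) (Fin n) ℝ)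
    (x : Fin n → ℝ) : (∑ i, M i) *ᵥ x = ∑ i, (M i *ᵥ x) := by
  ext k
  simp only [Matrix.mulVec, dotProduct, Matrix.sum_apply, Finset.sum_apply, Finset.sum_mul]
  rw [Finset.sum_comm]

lemma dotProduct_sum' {n : ℕ} {ι : Type*} [Fintype ι] (x : Fin n → ℝ) (f : ι → Fin n → ℝ) :
    x ⬝ᵥ (∑ i, f i) = ∑ i, x ⬝ᵥ (f i) := by
  simp only [dotProduct, Finset.sum_apply, Finset.mul_sum]
  rw [Finset.sum_comm]

set_option maxHeartbeats 1000000 in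
theorem stmt12 {N n : ℕ} (hN : 2 ≤ N) {m : Fin N → ℕ}
    (A : ∀ i, Matrix (Fin (m i)) (Fin n) ℝ)
    (Astack : Matrix ((i : Fin N) × Fin (m i)) (Fin n) ℝ)
    (hstack : ∀ i j, Astack ⟨i, j⟩ = A i j)
    (hrank : Astack.rank = n)
    (p : ℝ) (hp : 0 < p)
    (D : Fin N → Matrix (Fin n) (Fin n) ℝ)
    (hD : ∀ i, D i = (A i)ᵀ * A i + p • (Astackᵀ * Astack))
    (S : Matrix (Fin n) (Fin n) ℝ)
    (hS : S = ((N : ℝ) * ((N : ℝ) - 1))⁻¹ •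
      ∑ i, ∑ j ∈ Finset.Ioi i, (D i * (D j)⁻¹ + D j * (D i)⁻¹)) :
    ∀ (ς : ℝ) (v : Fin n → ℝ), v ≠ 0 → S *ᵥ v = ς • v →
      1 ≤ ς ∧ ς ≤ 1 + 1 / (p * N * (1 + p)) := by
  intro ς v hv hev
  have hNr : (2:ℝ) ≤ (N:ℝ) := by exact_mod_cast hN
  set G := Astackᵀ * Astack with hGdef
  -- G is positive definite
  have hGpd : G.PosDef := by
    have hinj : Function.Injective Astack.mulVec := by
      have h1 : LinearMap.ker Astack.mulVecLin = ⊥ := by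
        have h2 := LinearMap.finrank_range_add_finrank_ker Astack.mulVecLin
        rw [show Module.finrank ℝ (LinearMap.range Astack.mulVecLin) = n from hrank] at h2
        simp at h2
        exact h2
      have h3 : Function.Injective Astack.mulVecLin := LinearMap.ker_eq_bot.mp h1
      intro a b hab
      exact h3 (by simpa [Matrix.mulVecLin_apply] using hab)
    refine Matrix.PosDef.of_dotProduct_mulVec_pos ?_ ?_
    · simpa [Matrix.IsHermitian, conjTranspose_eq_transpose_of_trivial, hGdef] using
        (Matrix.isHermitian_conjTranspose_mul_self Astack)
    · intro x hx
      have he : star x ⬝ᵥ (Astackᵀ * Astack) *ᵥ x = (Astack *ᵥ x) ⬝ᵥ (Astack *ᵥ x) := by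
        simp [← mulVec_mulVec, dotProduct_mulVec, vecMul_transpose, dotProduct_comm]
      rw [hGdef, he]
      have hne : Astack *ᵥ x ≠ 0 := fun h0 => hx (hinj (by simpa using h0))
      exact Finset.sum_pos' (fun i _ => mul_self_nonneg _)
        (by
          obtain ⟨i, hi⟩ := Function.ne_iff.mp hne
          exact ⟨i, Finset.mem_univ i, mul_self_pos.mpr hi⟩)
  have hGsym : Gᵀ = G := sym_of_posSemidef hGpd.posSemidef
  -- the B i are positive semidefinite and sum to G
  have hB : ∀ i, ((A i)ᵀ * A i).PosSemidef := fun i => by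
    simpa [conjTranspose_eq_transpose_of_trivial] using
      Matrix.posSemidef_conjTranspose_mul_self (A i)
  have hsumB : ∑ i, (A i)ᵀ * A i = G := by
    ext k l
    rw [hGdef, Matrix.sum_apply, mul_apply, ← Finset.univ_sigma_univ, Finset.sum_sigma]
    refine Finset.sum_congr rfl fun i _ => ?_
    rw [mul_apply]
    refine Finset.sum_congr rfl fun j _ => ?_
    simp [hstack, transpose_apply]
  have hpG : (p • G).PosDef := by
    have hh : Gᴴ = G := hGpd.isHermitian
    refine Matrix.PosDef.of_dotProduct_mulVec_pos ?_ (fun x hx => ?_)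
    · show (p • G)ᴴ = p • G
      rw [conjTranspose_smul, star_trivial, hh]
    · rw [smul_mulVec, dotProduct_smul, smul_eq_mul]
      simpa using mul_pos hp (qf_pos hGpd hx)
  have hDpd : ∀ i, (D i).PosDef := fun i => by
    rw [hD i]
    exact Matrix.PosDef.posSemidef_add (hB i) hpG
  have hDsym : ∀ i, (D i)ᵀ = D i := fun i => sym_of_posSemidef (hDpd i).posSemidef
  set P := ∑ j, (D j)⁻¹ with hPdef
  have hsumD : ∑ i, D i = (1 + p * (N:ℝ)) • G := by
    have : (1 + p * (N:ℝ)) • G = G + ((N:ℝ) * p) • G := by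
      rw [add_smul, one_smul, mul_comm]
    rw [this]
    simp_rw [hD]
    rw [Finset.sum_add_distrib, hsumB, Finset.sum_const, card_univ, Fintype.card_fin,
      ← Nat.cast_smul_eq_nsmul ℝ, smul_smul]
  -- the key matrix identity
  have hkey : ∑ i, ∑ j ∈ Finset.Ioi i, (D i * (D j)⁻¹ + D j * (D i)⁻¹)
      = (1 + p * (N:ℝ)) • (G * P) - (N : ℝ) • (1 : Matrix (Fin n) (Fin n) ℝ) := by
    have e1 : ∑ i, ∑ j ∈ Finset.Ioi i, (D i * (D j)⁻¹ + D j * (D i)⁻¹)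
        = ∑ i, ∑ j ∈ Finset.univ.erase i, D j * (D i)⁻¹ := by
      set g : Fin N → Fin N → Matrix (Fin n) (Fin n) ℝ := fun i j => D i * (D j)⁻¹ with hg
      have swap : ∑ i, ∑ j ∈ Finset.Ioi i, g i j = ∑ i, ∑ j ∈ Finset.Iio i, g j i := by
        rw [Finset.sum_sigma', Finset.sum_sigma']
        apply Finset.sum_nbij' (fun x => ⟨x.2, x.1⟩) (fun x => ⟨x.2, x.1⟩) <;>
          simp [Finset.mem_sigma]
      have split : ∀ i : Fin N, ∑ j ∈ Finset.univ.erase i, g j i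
          = ∑ j ∈ Finset.Ioi i, g j i + ∑ j ∈ Finset.Iio i, g j i := by
        intro i
        rw [← Finset.sum_disjUnion (Finset.disjoint_Ioi_Iio i), Finset.Ioi_disjUnion_Iio]
        congr 1
        ext x
        simp [eq_comm]
      simp only [hg] at split swap
      simp_rw [Finset.sum_add_distrib, split, swap]
      rw [Finset.sum_add_distrib, add_comm]
    rw [e1]
    have e2 : ∀ i : Fin N, ∑ j ∈ Finset.univ.erase i, D j * (D i)⁻¹
        = (1 + p * (N:ℝ)) • (G * (D i)⁻¹) - 1 := by
      intro i
      rw [← Finset.sum_mul, Finset.sum_erase_eq_sub (Finset.mem_univ i), hsumD,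
        Matrix.sub_mul, Matrix.smul_mul,
        Matrix.mul_nonsing_inv _ ((Matrix.isUnit_iff_isUnit_det _).mp (hDpd i).isUnit)]
    simp_rw [e2]
    rw [Finset.sum_sub_distrib, ← Finset.smul_sum, ← Finset.mul_sum, Finset.sum_const,
      card_univ, Fintype.card_fin, ← Nat.cast_smul_eq_nsmul ℝ (M := Matrix (Fin n) (Fin n) ℝ)]
  -- eigen-equation manipulations
  have hcpos : 0 < (N:ℝ) * ((N:ℝ) - 1) := by nlinarith
  set κ := 1 + p * (N:ℝ) with hκ
  have hκpos : 0 < κ := by nlinarith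
  set μ := (N:ℝ) * ((N:ℝ) - 1) * ς + (N:ℝ) with hμ
  have hMv : κ • (G *ᵥ (P *ᵥ v)) = μ • v := by
    have hS' : ((N:ℝ) * ((N:ℝ) - 1)) • S = κ • (G * P) - (N:ℝ) • 1 := by
      rw [hS, smul_smul, mul_inv_cancel₀ (ne_of_gt hcpos), one_smul, hkey]
    have h2 : (κ • (G * P) - (N:ℝ) • (1 : Matrix (Fin n) (Fin n) ℝ)) *ᵥ v
        = ((N:ℝ) * ((N:ℝ) - 1) * ς) • v := by
      rw [← hS', smul_mulVec, hev, smul_smul]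
    rw [sub_mulVec, smul_mulVec, smul_mulVec, one_mulVec, ← mulVec_mulVec] at h2
    have := sub_eq_iff_eq_add.mp h2
    rw [this, hμ, add_smul]
  set u := G⁻¹ *ᵥ v with hu
  have hGu : G *ᵥ u = v := pd_inv_mulVec hGpd v
  have hPv : P *ᵥ v = (μ / κ) • u := by
    have h3 : G *ᵥ (P *ᵥ v) = (μ / κ) • v := by
      have := congrArg (fun w => κ⁻¹ • w) hMv
      simpa [smul_smul, inv_mul_cancel₀ (ne_of_gt hκpos), div_eq_inv_mul] using this
    have h4 : G⁻¹ *ᵥ (G *ᵥ (P *ᵥ v)) = G⁻¹ *ᵥ ((μ / κ) • v) := by rw [h3]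
    rw [pd_inv_mulVec' hGpd, mulVec_smul] at h4
    rw [h4, hu]
  set q := v ⬝ᵥ u with hq'
  have hq : 0 < q := qf_pos hGpd.inv hv
  have huv : u ⬝ᵥ v = q := by rw [hq', dotProduct_comm]
  have huGu : u ⬝ᵥ (G *ᵥ u) = q := by rw [hGu, huv]
  have hr : v ⬝ᵥ (P *ᵥ v) = (μ / κ) * q := by
    rw [hPv, dotProduct_smul, smul_eq_mul, hq']
  have hrsum : v ⬝ᵥ (P *ᵥ v) = ∑ j, v ⬝ᵥ ((D j)⁻¹ *ᵥ v) := by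
    rw [hPdef, sum_mulVec', dotProduct_sum' v]
  -- lower bound
  have hlow : ((N:ℝ)^2 / κ) * q ≤ v ⬝ᵥ (P *ᵥ v) := by
    set c := (N:ℝ) / κ with hc
    have hCv : (c • G⁻¹) *ᵥ v = c • u := by rw [smul_mulVec, hu]
    have each : ∀ j : Fin N, 2 * (c * q) - c^2 * (u ⬝ᵥ (D j *ᵥ u)) ≤ v ⬝ᵥ ((D j)⁻¹ *ᵥ v) := by
      intro j
      have h := chord_lower (hDpd j) (hDsym j) (C := c • G⁻¹) v
      rw [hCv] at h
      have e1 : v ⬝ᵥ (c • u) = c * q := by rw [dotProduct_smul, smul_eq_mul, hq']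
      have e2 : (c • u) ⬝ᵥ (D j *ᵥ (c • u)) = c^2 * (u ⬝ᵥ (D j *ᵥ u)) := by
        rw [mulVec_smul, dotProduct_smul, smul_dotProduct, smul_eq_mul, smul_eq_mul]
        ring
      rw [e1, e2] at h
      exact h
    have hsum2 : ∑ j, (u ⬝ᵥ (D j *ᵥ u)) = κ * q := by
      rw [← dotProduct_sum' u, ← sum_mulVec', hsumD, smul_mulVec, dotProduct_smul,
        smul_eq_mul, huGu]
    have hsumle := Finset.sum_le_sum (fun j (_ : j ∈ Finset.univ) => each j)
    rw [← hrsum] at hsumle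
    have e3 : ∑ j : Fin N, (2 * (c * q) - c^2 * (u ⬝ᵥ (D j *ᵥ u)))
        = 2 * (N:ℝ) * (c * q) - c^2 * (κ * q) := by
      rw [Finset.sum_sub_distrib, Finset.sum_const, card_univ, Fintype.card_fin,
        ← Finset.mul_sum, hsum2, nsmul_eq_mul]
      ring
    rw [e3] at hsumle
    have : ((N:ℝ)^2 / κ) * q = 2 * (N:ℝ) * (c * q) - c^2 * (κ * q) := by
      rw [hc]
      field_simp
      ring
    exact this.trans_le hsumle
  -- upper bound
  have hκne : κ ≠ 0 := ne_of_gt hκpos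
  have hup : v ⬝ᵥ (P *ᵥ v) ≤ ((N:ℝ)/p - 1/(p*(1+p))) * q := by
    have hGB : ∀ j, (G - (A j)ᵀ * A j).PosSemidef := by
      intro j
      have e : G - (A j)ᵀ * A j = ∑ i ∈ Finset.univ.erase j, (A i)ᵀ * A i := by
        rw [Finset.sum_erase_eq_sub (Finset.mem_univ j), hsumB]
      rw [e]
      exact psd_sum _ _ (fun i _ => hB i)
    have each : ∀ j : Fin N, v ⬝ᵥ ((D j)⁻¹ *ᵥ v)
        ≤ (1/p) * q - (1/(p*(1+p))) * (u ⬝ᵥ (((A j)ᵀ * A j) *ᵥ u)) := by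
      intro j
      set B := (A j)ᵀ * A j with hBdef
      set b := u ⬝ᵥ (B *ᵥ u) with hb
      have hbnn : 0 ≤ b := qf_nonneg (hB j) u
      set w := (D j)⁻¹ *ᵥ (B *ᵥ u) with hw
      set e := (B *ᵥ u) ⬝ᵥ w with he
      have hBsym : Bᵀ = B := sym_of_posSemidef (hB j)
      have hDinvsym : ((D j)⁻¹)ᵀ = (D j)⁻¹ := inv_sym (hDpd j)
      have h1p : (0:ℝ) < 1 + p := by linarith
      have hp2 : (0:ℝ) < p^2 := by positivity
      -- e ≤ b / (1+p) via sandwich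
      have hebound : (1+p) * e ≤ b := by
        have hF : ((1+p) • B).PosSemidef := psd_smul (hB j) (by linarith)
        have hDF : (D j - (1+p) • B).PosSemidef := by
          have e4 : D j - (1+p) • B = p • (G - B) := by
            rw [hD j, hBdef]
            module
          rw [e4]
          exact psd_smul (hGB j) hp.le
        have hs := sandwich_upper (hDpd j) hF hDF u
        have eL : u ⬝ᵥ (((1+p) • B) *ᵥ ((D j)⁻¹ *ᵥ (((1+p) • B) *ᵥ u)))
            = (1+p)^2 * e := by
          simp only [smul_mulVec, mulVec_smul, dotProduct_smul, smul_eq_mul]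
          rw [← hw, dotmv_symm B hBsym u w, dotProduct_comm w (B *ᵥ u), ← he]
          ring
        have eR : u ⬝ᵥ (((1+p) • B) *ᵥ u) = (1+p) * b := by
          rw [smul_mulVec, dotProduct_smul, smul_eq_mul, hb]
        rw [eL, eR] at hs
        nlinarith
      -- expansion of v ⬝ᵥ (D j)⁻¹ v
      have hDu : D j *ᵥ u = B *ᵥ u + p • v := by
        rw [hD j, add_mulVec, smul_mulVec, hGu, hBdef]
      have hexp : p^2 * (v ⬝ᵥ ((D j)⁻¹ *ᵥ v)) = p * q - b + e := by
        have hpv : p • v = D j *ᵥ u - B *ᵥ u := by rw [hDu]; abel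
        have h5 : (p • v) ⬝ᵥ ((D j)⁻¹ *ᵥ (p • v)) = p^2 * (v ⬝ᵥ ((D j)⁻¹ *ᵥ v)) := by
          rw [mulVec_smul, dotProduct_smul, smul_dotProduct, smul_eq_mul, smul_eq_mul]
          ring
        have hDiD : (D j)⁻¹ *ᵥ (D j *ᵥ u) = u := pd_inv_mulVec' (hDpd j) u
        have h6 : (p • v) ⬝ᵥ ((D j)⁻¹ *ᵥ (p • v)) = p * q - b + e := by
          rw [hpv, mulVec_sub, dotProduct_sub, sub_dotProduct, sub_dotProduct, hDiD, ← hw]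
          have t1 : (D j *ᵥ u) ⬝ᵥ u = u ⬝ᵥ (D j *ᵥ u) := dotProduct_comm _ _
          have t2 : u ⬝ᵥ (D j *ᵥ u) = b + p * q := by
            rw [hDu, dotProduct_add, dotProduct_smul, smul_eq_mul, ← hb, huv]
          have t3 : (B *ᵥ u) ⬝ᵥ u = b := by rw [dotProduct_comm, ← hb]
          have t4 : (D j *ᵥ u) ⬝ᵥ ((D j)⁻¹ *ᵥ (B *ᵥ u)) = b := by
            rw [dotmv_symm _ hDinvsym (D j *ᵥ u) (B *ᵥ u), hDiD, t3]
          rw [t4, t1, t2, he, t3]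
          ring
        rw [← h5, h6]
      -- conclude
      rw [show (1/p) * q - (1/(p*(1+p))) * b
          = ((1+p) * (p * q) - p * b) / (p^2 * (1+p)) by field_simp]
      rw [le_div_iff₀ (by positivity : (0:ℝ) < p^2 * (1+p))]
      have hfr : (1+p) * (p * q - b + e) ≤ (1+p) * (p * q) - p * b := by nlinarith
      nlinarith [hexp, hfr]
    have hsumle := Finset.sum_le_sum (fun j (_ : j ∈ Finset.univ) => each j)
    rw [← hrsum] at hsumle
    have hsumB' : ∑ j, (u ⬝ᵥ (((A j)ᵀ * A j) *ᵥ u)) = q := by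
      rw [← dotProduct_sum' u, ← sum_mulVec', hsumB, huGu]
    have e5 : ∑ j : Fin N, ((1/p) * q - (1/(p*(1+p))) * (u ⬝ᵥ (((A j)ᵀ * A j) *ᵥ u)))
        = (N:ℝ) * ((1/p) * q) - (1/(p*(1+p))) * q := by
      rw [Finset.sum_sub_distrib, Finset.sum_const, card_univ, Fintype.card_fin,
        ← Finset.mul_sum, hsumB', nsmul_eq_mul]
    rw [e5] at hsumle
    have e6 : ((N:ℝ)/p - 1/(p*(1+p))) * q = (N:ℝ) * ((1/p) * q) - (1/(p*(1+p))) * q := by ring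
    exact hsumle.trans_eq e6.symm
  -- combine
  have hμlow : (N:ℝ)^2 ≤ μ := by
    have := hlow
    rw [hr] at this
    have h7 : (N:ℝ)^2 / κ ≤ μ / κ := le_of_mul_le_mul_right this hq
    calc (N:ℝ)^2 = ((N:ℝ)^2 / κ) * κ := (div_mul_cancel₀ _ hκne).symm
      _ ≤ (μ / κ) * κ := by exact mul_le_mul_of_nonneg_right h7 hκpos.le
      _ = μ := div_mul_cancel₀ _ hκne
  have hμup : μ ≤ κ * ((N:ℝ)/p - 1/(p*(1+p))) := by
    have := hup
    rw [hr] at this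
    have h7 : μ / κ ≤ (N:ℝ)/p - 1/(p*(1+p)) := le_of_mul_le_mul_right this hq
    calc μ = (μ / κ) * κ := (div_mul_cancel₀ _ hκne).symm
      _ ≤ ((N:ℝ)/p - 1/(p*(1+p))) * κ := mul_le_mul_of_nonneg_right h7 hκpos.le
      _ = κ * ((N:ℝ)/p - 1/(p*(1+p))) := by ring
  constructor
  · -- 1 ≤ ς
    rw [hμ] at hμlow
    nlinarith
  · -- upper bound on ς
    have hid : κ * ((N:ℝ)/p - 1/(p*(1+p))) - (N:ℝ)
        = (N:ℝ) * ((N:ℝ) - 1) * (1 + 1 / (p * (N:ℝ) * (1 + p))) := by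
      rw [hκ]
      have h1p : (0:ℝ) < 1 + p := by linarith
      have hN0 : (0:ℝ) < (N:ℝ) := by linarith
      field_simp
      ring
    rw [hμ] at hμup
    have h8 : (N:ℝ) * ((N:ℝ) - 1) * ς ≤ (N:ℝ) * ((N:ℝ) - 1) * (1 + 1 / (p * (N:ℝ) * (1 + p))) := by
      linarith [hμup, hid.symm.le]
    exact le_of_mul_le_mul_left h8 hcpos
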